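/- arXiv:1410.6912 — 2 statements merged into one kernel-verified Lean document; each statement's English description precedes it below -/
import Mathlib

section
/- Let m be a positive integer. If there exist integers x, n with n ≥ 1 such that cos(2πx/n) = 1/√m, then m ∈ {1, 2, 4}. -/
open Real Polynomial

lemma aux_isIntegral_of_pow_eq_one (z : ℂ) (N : ℕ) (hN : N ≠ 0) (hz : z ^ N = 1) :
    IsIntegral ℤ z := by
  refine ⟨X ^ N - C 1, ?_, ?_⟩
  · simpa using monic_X_pow_sub_C (1 : ℤ) hN
  · simp [hz]

/-- If `1/√m` (for a positive integer `m`) is the cosine of a rational multiple of `2π`, then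
`m ∈ {1, 2, 4}`. -/
theorem inv_sqrt_cos_rational_angle (m : ℕ) (hm : 0 < m) (x n : ℤ) (hn : 1 ≤ n)
    (h : Real.cos (2 * π * x / n) = 1 / Real.sqrt m) :
    m = 1 ∨ m = 2 ∨ m = 4 := by
  have hn0 : (n : ℝ) ≠ 0 := by
    have : (0:ℝ) < n := by exact_mod_cast hn
    linarith
  set θ : ℝ := 2 * π * x / n with hθ
  set ζ : ℂ := Complex.exp (θ * Complex.I) with hζ
  have hNne : n.toNat ≠ 0 := by omega
  have hztoNat : ((n.toNat : ℤ) : ℂ) = (n : ℂ) := by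
    norm_cast
    omega
  have hζpow : ζ ^ n.toNat = 1 := by
    rw [hζ, ← Complex.exp_nat_mul]
    have key : (n.toNat : ℂ) * ((θ : ℂ) * Complex.I) = (x : ℂ) * (2 * π * Complex.I) := by
      have hnC : (n : ℂ) ≠ 0 := by exact_mod_cast (by omega : n ≠ 0)
      have : ((n.toNat : ℤ) : ℂ) = (n : ℂ) := hztoNat
      have hnt : ((n.toNat : ℕ) : ℂ) = (n : ℂ) := by exact_mod_cast hztoNat
      rw [hnt, hθ]
      push_cast
      field_simp
    rw [key, Complex.exp_int_mul_two_pi_mul_I]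
  have hζinvpow : (ζ⁻¹) ^ n.toNat = 1 := by
    rw [inv_pow, hζpow, inv_one]
  have hint : IsIntegral ℤ (ζ + ζ⁻¹) :=
    (aux_isIntegral_of_pow_eq_one ζ _ hNne hζpow).add
      (aux_isIntegral_of_pow_eq_one ζ⁻¹ _ hNne hζinvpow)
  have hcos : ζ + ζ⁻¹ = 2 * (Real.cos θ : ℂ) := by
    rw [hζ, ← Complex.exp_neg, Complex.ofReal_cos, Complex.cos]
    ring
  have hsq : ((4 / m : ℚ) : ℂ) = (ζ + ζ⁻¹) ^ 2 := by
    rw [hcos]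
    have hcosθ : Real.cos θ = 1 / Real.sqrt m := h
    have hmr : (0:ℝ) ≤ (m:ℝ) := by positivity
    have h2 : (Real.cos θ) ^ 2 = 1 / m := by
      rw [hcosθ, div_pow, one_pow, Real.sq_sqrt hmr]
    have hmne : (m:ℝ) ≠ 0 := by exact_mod_cast hm.ne'
    rw [mul_pow, ← Complex.ofReal_pow, h2]
    push_cast
    field_simp
    norm_num
  have hint2 : IsIntegral ℤ ((4 / m : ℚ) : ℂ) := by
    rw [hsq]; exact hint.pow 2
  have hratint : IsIntegral ℤ ((4 / m : ℚ)) := by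
    have hinj : Function.Injective (algebraMap ℚ ℂ) := (algebraMap ℚ ℂ).injective
    exact (isIntegral_algebraMap_iff hinj).mp (by simpa using hint2)
  obtain ⟨z, hz⟩ := IsIntegrallyClosed.isIntegral_iff.mp hratint
  have hzq : (z : ℚ) = 4 / m := by exact_mod_cast hz
  have hmq : ((m:ℚ)) ≠ 0 := by exact_mod_cast hm.ne'
  have hzm : (z : ℚ) * m = 4 := by
    rw [hzq]; field_simp
  have hzmZ : z * (m : ℤ) = 4 := by exact_mod_cast hzm
  have hdvd : (m : ℤ) ∣ 4 := Dvd.intro_left z hzmZ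
  have hdvdN : m ∣ 4 := by exact_mod_cast hdvd
  have hle : m ≤ 4 := Nat.le_of_dvd (by norm_num) hdvdN
  interval_cases m <;> revert hdvdN <;> decide
end

section
/- For integers n ≥ 1, the equation cos(2πx/n) = (1+√5)/4 has an integer solution x if and only if 10 divides n; in that case the solutions are x ∈ (n/10 + nℤ) ∪ (9n/10 + nℤ). -/
open Real

/-- For `n ≥ 1`, `cos(2πx/n) = (1+√5)/4` has an integer solution `x` iff `10 ∣ n`, in which case
the solutions are exactly `x ∈ (n/10 + nℤ) ∪ (9n/10 + nℤ)`. -/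
theorem cos_eq_golden_solutions (n : ℤ) (hn : 1 ≤ n) :
    ((∃ x : ℤ, Real.cos (2 * π * x / n) = (1 + Real.sqrt 5) / 4) ↔ 10 ∣ n) ∧
    (10 ∣ n → ∀ x : ℤ, Real.cos (2 * π * x / n) = (1 + Real.sqrt 5) / 4 ↔
      ∃ k : ℤ, x = n / 10 + n * k ∨ x = 9 * n / 10 + n * k) := by
  have hn0 : (n : ℝ) ≠ 0 := by
    exact_mod_cast (by omega : n ≠ 0)
  -- helper: real equation ↔ integer equation
  have cancel : ∀ a b : ℤ, ((π / 5 : ℝ) = 2 * a * π + 2 * π * b / n) ↔ (10 * b = n - 10 * a * n) := by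
    intro a b
    constructor
    · intro h
      have h2 : π * ((n : ℝ)) = π * (10 * a * n + 10 * b) := by
        field_simp at h
        ring_nf at h ⊢
        linear_combination π * h
      have h3 := mul_left_cancel₀ Real.pi_ne_zero h2
      have h4 : (n : ℤ) = 10 * a * n + 10 * b := by exact_mod_cast h3
      linarith
    · intro h
      have h3 : (n : ℝ) = 10 * a * n + 10 * b := by
        have : (n : ℤ) = 10 * a * n + 10 * b := by linarith
        exact_mod_cast this
      field_simp
      linear_combination h3
  have key : ∀ x : ℤ, Real.cos (2 * π * x / n) = (1 + Real.sqrt 5) / 4 ↔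
      ∃ k : ℤ, 10 * x = n - 10 * k * n ∨ 10 * x = 10 * k * n - n := by
    intro x
    rw [← Real.cos_pi_div_five, Real.cos_eq_cos_iff]
    constructor
    · rintro ⟨k, h | h⟩
      · exact ⟨k, Or.inl ((cancel k x).mp h)⟩
      · refine ⟨k, Or.inr ?_⟩
        have h' : (π / 5 : ℝ) = 2 * k * π + 2 * π * (-x : ℤ) / n := by
          push_cast
          linear_combination h
        have := (cancel k (-x)).mp h'
        linarith
    · rintro ⟨k, h | h⟩
      · exact ⟨k, Or.inl ((cancel k x).mpr h)⟩
      · refine ⟨k, Or.inr ?_⟩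
        have h' := (cancel k (-x)).mpr (by linarith)
        push_cast at h'
        linear_combination h'
  constructor
  · constructor
    · rintro ⟨x, hx⟩
      obtain ⟨k, h | h⟩ := (key x).mp hx
      · exact ⟨x + k * n, by linear_combination -h⟩
      · exact ⟨-x + k * n, by linear_combination h⟩
    · rintro ⟨m, hm⟩
      refine ⟨m, (key m).mpr ⟨0, Or.inl ?_⟩⟩
      omega
  · rintro ⟨m, hm⟩ x
    subst hm
    rw [key x]
    have hd1 : 10 * m / 10 = m := by omega
    have hd2 : 9 * (10 * m) / 10 = 9 * m := by omega
    rw [hd1, hd2]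
    constructor
    · rintro ⟨k, h | h⟩
      · refine ⟨-k, Or.inl ?_⟩
        have h10 : 10 * x = 10 * (m + 10 * m * (-k)) := by linear_combination h
        omega
      · refine ⟨k - 1, Or.inr ?_⟩
        have h10 : 10 * x = 10 * (9 * m + 10 * m * (k - 1)) := by linear_combination h
        omega
    · rintro ⟨k, h | h⟩
      · exact ⟨-k, Or.inl (by linear_combination 10 * h)⟩
      · exact ⟨k + 1, Or.inr (by linear_combination 10 * h)⟩
end
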